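/- Let T be a monad on a category C, F an endofunctor on C with an extension F̄ to the Kleisli category Kl(T) (i.e. F̄ ∘ J = J ∘ F where J : C → Kl(T) is the canonical functor). If (μF, ι) is an initial F-algebra in C, then (μF, J(ι)) is an initial F̄-algebra in Kl(T). -/

import Mathlib

open CategoryTheory CategoryTheory.Limits

section Aux

variable {C : Type*} [Category C] (T : Monad C)

/-- A `C`-morphism `X ⟶ T B` as a Kleisli morphism. -/
def kmk {X : C} {B : Kleisli T} (f : X ⟶ T.obj B.of) :
    (Kleisli.Adjunction.toKleisli T).obj X ⟶ B :=
  Kleisli.Hom.mk f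

/-- The underlying `C`-morphism of a Kleisli morphism out of `J X`. -/
def kof {X : C} {B : Kleisli T} (f : (Kleisli.Adjunction.toKleisli T).obj X ⟶ B) :
    X ⟶ T.obj B.of :=
  f.of

lemma toKleisli_map_comp {X Y : C} {B : Kleisli T} (g : X ⟶ Y)
    (v : (Kleisli.Adjunction.toKleisli T).obj Y ⟶ B) :
    (Kleisli.Adjunction.toKleisli T).map g ≫ v =
      kmk T (g ≫ v.of) := by
  let v' : Y ⟶ T.obj B.of := v.of
  apply Kleisli.hom_ext
  show (g ≫ T.η.app Y) ≫ T.map v' ≫ T.μ.app B.of = g ≫ v'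
  rw [Category.assoc, ← T.η.naturality_assoc v']
  simp

lemma kleisli_decomp {X : C} {B : Kleisli T} (f : (Kleisli.Adjunction.toKleisli T).obj X ⟶ B) :
    f = (Kleisli.Adjunction.toKleisli T).map (kof T f) ≫
      (kmk T (𝟙 (T.obj B.of)) :
        (Kleisli.Adjunction.toKleisli T).obj (T.obj B.of) ⟶ B) := by
  rw [toKleisli_map_comp]
  let fC : X ⟶ T.obj B.of := f.of
  exact Kleisli.hom_ext (Category.comp_id fC).symm

/-- The lifted algebra in the Kleisli category. -/
def liftedAlg (F : C ⥤ C) (Fbar : Kleisli T ⥤ Kleisli T)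
    (hobj : ∀ X : C, Fbar.obj ((Kleisli.Adjunction.toKleisli T).obj X) =
      (Kleisli.Adjunction.toKleisli T).obj (F.obj X))
    (Alg : Endofunctor.Algebra F) : Endofunctor.Algebra Fbar :=
  { a := (Kleisli.Adjunction.toKleisli T).obj Alg.a,
    str := eqToHom (hobj Alg.a) ≫ (Kleisli.Adjunction.toKleisli T).map Alg.str }

lemma kleisli_alg_aux (F : C ⥤ C)
    (Fbar : Kleisli T ⥤ Kleisli T)
    (hobj : ∀ X : C, Fbar.obj ((Kleisli.Adjunction.toKleisli T).obj X) =
      (Kleisli.Adjunction.toKleisli T).obj (F.obj X))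
    (hmap : ∀ {X Y : C} (f : X ⟶ Y),
      Fbar.map ((Kleisli.Adjunction.toKleisli T).map f) =
        eqToHom (hobj X) ≫ (Kleisli.Adjunction.toKleisli T).map (F.map f) ≫
          eqToHom (hobj Y).symm)
    (Alg : Endofunctor.Algebra F) (hinit : IsInitial Alg)
    (A' : Endofunctor.Algebra Fbar) :
    ∃ h : liftedAlg T F Fbar hobj Alg ⟶ A', ∀ m, m = h := by
  set J := Kleisli.Adjunction.toKleisli T with hJ
  -- the canonical Kleisli morphism T.obj A'.a ⟶ A'.a
  let u : J.obj (T.obj A'.a.of) ⟶ A'.a := kmk T (𝟙 (T.obj A'.a.of))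
  -- the C-level algebra structure on T.obj A'.a
  let v : J.obj (F.obj (T.obj A'.a.of)) ⟶ A'.a :=
    eqToHom (hobj (T.obj A'.a.of)).symm ≫ Fbar.map u ≫ A'.str
  let β : F.obj (T.obj A'.a.of) ⟶ T.obj A'.a.of := v.of
  let Balg : Endofunctor.Algebra F := { a := T.obj A'.a.of, str := β }
  have key : ∀ {X : C} (f : J.obj X ⟶ A'.a),
      Fbar.map f ≫ A'.str = eqToHom (hobj X) ≫ J.map (F.map f.of) ≫ v := by
    intro X f
    conv_lhs => rw [kleisli_decomp T f, Fbar.map_comp, hmap]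
    simp only [v, u, hJ, Category.assoc, kof]
    rfl
  have crit : ∀ (m : J.obj Alg.a ⟶ A'.a),
      (Fbar.map m ≫ A'.str = (eqToHom (hobj Alg.a) ≫ J.map Alg.str) ≫ m) ↔
        (F.map m.of ≫ β = Alg.str ≫ m.of) := by
    intro m
    rw [key m, toKleisli_map_comp, Category.assoc, toKleisli_map_comp]
    rw [cancel_epi (eqToHom (hobj Alg.a))]
    exact ⟨fun h => congrArg Kleisli.Hom.of h, fun h => Kleisli.hom_ext h⟩
  refine ⟨{ f := kmk T (hinit.to Balg).f, h := (crit (kmk T (hinit.to Balg).f)).mpr (hinit.to Balg).h }, ?_⟩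
  intro m
  have hm : F.map m.f.of ≫ Balg.str = Alg.str ≫ m.f.of :=
    (crit m.f).mp m.h
  have heq : ({ f := m.f.of, h := hm } : Alg ⟶ Balg) = hinit.to Balg := hinit.hom_ext _ _
  have hf : m.f.of = (hinit.to Balg).f :=
    congrArg Endofunctor.Algebra.Hom.f heq
  exact Endofunctor.Algebra.Hom.ext (Kleisli.hom_ext hf)

end Aux

theorem initial_algebra_lifts_to_kleisli
    {C : Type*} [Category C] (T : Monad C) (F : C ⥤ C)
    (Fbar : Kleisli T ⥤ Kleisli T)
    (hobj : ∀ X : C, Fbar.obj ((Kleisli.Adjunction.toKleisli T).obj X) =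
      (Kleisli.Adjunction.toKleisli T).obj (F.obj X))
    (hmap : ∀ {X Y : C} (f : X ⟶ Y),
      Fbar.map ((Kleisli.Adjunction.toKleisli T).map f) =
        eqToHom (hobj X) ≫ (Kleisli.Adjunction.toKleisli T).map (F.map f) ≫
          eqToHom (hobj Y).symm)
    (Alg : Endofunctor.Algebra F) (hinit : IsInitial Alg) :
    Nonempty (IsInitial
      ({ a := (Kleisli.Adjunction.toKleisli T).obj Alg.a,
         str := eqToHom (hobj Alg.a) ≫ (Kleisli.Adjunction.toKleisli T).map Alg.str } :
        Endofunctor.Algebra Fbar)) := by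
  show Nonempty (IsInitial (liftedAlg T F Fbar hobj Alg))
  exact ⟨IsInitial.ofUniqueHom
    (fun A' => (kleisli_alg_aux T F Fbar hobj hmap Alg hinit A').choose)
    (fun A' m => (kleisli_alg_aux T F Fbar hobj hmap Alg hinit A').choose_spec m)⟩
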